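/- The set S6 = {(x,y) ∈ ℤ×ℤ : x ≡ 3y (mod 7)} is strongly optimal for the infinite triangular grid T6: for every vertex v of T6, exactly one vertex of the closed neighborhood N[v] belongs to S6. Consequently the closed neighborhoods N[s], s ∈ S6, partition the vertex set of T6. -/

import Mathlib

/-- The infinite triangular grid: vertices `ℤ × ℤ`, with `(x,y)` adjacent to `(x',y')` iff
`(x'−x, y'−y) ∈ {(1,0),(−1,0),(0,1),(0,−1),(1,1),(−1,−1)}`. -/
def T6 : SimpleGraph (ℤ × ℤ) where
  Adj p q :=
    (q.1 - p.1 = 1 ∧ q.2 - p.2 = 0) ∨ (q.1 - p.1 = -1 ∧ q.2 - p.2 = 0) ∨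
    (q.1 - p.1 = 0 ∧ q.2 - p.2 = 1) ∨ (q.1 - p.1 = 0 ∧ q.2 - p.2 = -1) ∨
    (q.1 - p.1 = 1 ∧ q.2 - p.2 = 1) ∨ (q.1 - p.1 = -1 ∧ q.2 - p.2 = -1)
  symm := by
    constructor
    intro p q h
    omega
  loopless := by
    constructor
    intro p h
    omega

/-- `S6 = {(x,y) : x ≡ 3y (mod 7)}`. -/
def S6 : Set (ℤ × ℤ) := {p | Int.ModEq 7 p.1 (3 * p.2)}

/-- The closed neighborhood `N[v]` in `T6`. -/
def closedNbhdT6 (v : ℤ × ℤ) : Set (ℤ × ℤ) := insert v (T6.neighborSet v)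

lemma mem_closed (u v : ℤ × ℤ) : u ∈ closedNbhdT6 v ↔
    (u.1 - v.1 = 0 ∧ u.2 - v.2 = 0) ∨
    (u.1 - v.1 = 1 ∧ u.2 - v.2 = 0) ∨ (u.1 - v.1 = -1 ∧ u.2 - v.2 = 0) ∨
    (u.1 - v.1 = 0 ∧ u.2 - v.2 = 1) ∨ (u.1 - v.1 = 0 ∧ u.2 - v.2 = -1) ∨
    (u.1 - v.1 = 1 ∧ u.2 - v.2 = 1) ∨ (u.1 - v.1 = -1 ∧ u.2 - v.2 = -1) := by
  simp only [closedNbhdT6, Set.mem_insert_iff, SimpleGraph.mem_neighborSet, T6,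
    Prod.ext_iff]
  omega

lemma mem_S6 (u : ℤ × ℤ) : u ∈ S6 ↔ (u.1 - 3 * u.2) % 7 = 0 := by
  show u.1 % 7 = (3 * u.2) % 7 ↔ _
  omega

lemma key (v : ℤ × ℤ) : ∃! u : ℤ × ℤ, u ∈ S6 ∧ u ∈ closedNbhdT6 v := by
  obtain ⟨x, y⟩ := v
  have h : (x - 3 * y) % 7 = 0 ∨ (x - 3 * y) % 7 = 1 ∨ (x - 3 * y) % 7 = 2 ∨
      (x - 3 * y) % 7 = 3 ∨ (x - 3 * y) % 7 = 4 ∨ (x - 3 * y) % 7 = 5 ∨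
      (x - 3 * y) % 7 = 6 := by omega
  rcases h with h | h | h | h | h | h | h
  · refine ⟨(x, y), ⟨?_, ?_⟩, ?_⟩
    · simp [mem_S6]; omega
    · simp [mem_closed]
    · rintro ⟨a, b⟩ ⟨h1, h2⟩
      simp [mem_S6] at h1
      simp [mem_closed] at h2
      simp only [Prod.ext_iff]; omega
  · refine ⟨(x - 1, y), ⟨?_, ?_⟩, ?_⟩
    · simp [mem_S6]; omega
    · simp [mem_closed]
    · rintro ⟨a, b⟩ ⟨h1, h2⟩
      simp [mem_S6] at h1
      simp [mem_closed] at h2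
      simp only [Prod.ext_iff]; omega
  · refine ⟨(x + 1, y + 1), ⟨?_, ?_⟩, ?_⟩
    · simp [mem_S6]; omega
    · simp [mem_closed]
    · rintro ⟨a, b⟩ ⟨h1, h2⟩
      simp [mem_S6] at h1
      simp [mem_closed] at h2
      simp only [Prod.ext_iff]; omega
  · refine ⟨(x, y + 1), ⟨?_, ?_⟩, ?_⟩
    · simp [mem_S6]; omega
    · simp [mem_closed]
    · rintro ⟨a, b⟩ ⟨h1, h2⟩
      simp [mem_S6] at h1
      simp [mem_closed] at h2
      simp only [Prod.ext_iff]; omega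
  · refine ⟨(x, y - 1), ⟨?_, ?_⟩, ?_⟩
    · simp [mem_S6]; omega
    · simp [mem_closed]
    · rintro ⟨a, b⟩ ⟨h1, h2⟩
      simp [mem_S6] at h1
      simp [mem_closed] at h2
      simp only [Prod.ext_iff]; omega
  · refine ⟨(x - 1, y - 1), ⟨?_, ?_⟩, ?_⟩
    · simp [mem_S6]; omega
    · simp [mem_closed]
    · rintro ⟨a, b⟩ ⟨h1, h2⟩
      simp [mem_S6] at h1
      simp [mem_closed] at h2
      simp only [Prod.ext_iff]; omega
  · refine ⟨(x + 1, y), ⟨?_, ?_⟩, ?_⟩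
    · simp [mem_S6]; omega
    · simp [mem_closed]
    · rintro ⟨a, b⟩ ⟨h1, h2⟩
      simp [mem_S6] at h1
      simp [mem_closed] at h2
      simp only [Prod.ext_iff]; omega

lemma closed_symm (u v : ℤ × ℤ) : u ∈ closedNbhdT6 v ↔ v ∈ closedNbhdT6 u := by
  simp only [mem_closed]
  omega

/-- `S6` is strongly optimal for `T6`: every vertex has exactly one vertex of
`S6` in its closed neighborhood; consequently the closed neighborhoods `N[s]`, `s ∈ S6`,
partition the vertex set. -/
theorem stmt_12 :
    (∀ v : ℤ × ℤ, ∃! u : ℤ × ℤ, u ∈ S6 ∧ u ∈ closedNbhdT6 v) ∧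
    (⋃ s ∈ S6, closedNbhdT6 s) = Set.univ ∧
    S6.PairwiseDisjoint closedNbhdT6 := by
  refine ⟨key, ?_, ?_⟩
  · ext v
    simp only [Set.mem_iUnion, Set.mem_univ, iff_true]
    obtain ⟨u, ⟨hu1, hu2⟩, _⟩ := key v
    exact ⟨u, hu1, (closed_symm v u).mpr hu2⟩
  · intro s hs t ht hst
    rw [Function.onFun, Set.disjoint_left]
    intro w hws hwt
    obtain ⟨u, _, huniq⟩ := key w
    exact hst ((huniq s ⟨hs, (closed_symm w s).mp hws⟩).trans
      (huniq t ⟨ht, (closed_symm w t).mp hwt⟩).symm)
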